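/- arXiv:2303.08925 — 4 statements merged into one kernel-verified Lean document; each statement's English description precedes it below -/
import Mathlib

section
/- Fix n ≥ 2. A permutation σ of {1,…,n} satisfies the condition 'for every k ∈ {1,…,n−1}, if σ⁻¹(k) < σ⁻¹(k+1) then σ⁻¹(k+1) = σ⁻¹(k) + 1' if and only if σ = w_{d_1,…,d_r} for some composition (d_1,…,d_r) of n. -/
/-- Partial sums `D_a = d_1 + ⋯ + d_a` of a composition (0-indexed: `psum d a = ∑_{b < a} d b`). -/
def psum (d : ℕ → ℕ) (a : ℕ) : ℕ := ∑ b ∈ Finset.range a, d b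

/-- `σ` is the block anti-diagonal permutation `w_{d_1,…,d_r}` (in 0-indexed coordinates):
for `0 ≤ a < r` and `0 ≤ k < d a`, the point `D_a + k` is sent to `n - D_{a+1} + k`. -/
def IsBlockPerm (n r : ℕ) (d : ℕ → ℕ) (σ : Equiv.Perm (Fin n)) : Prop :=
  ∀ a k : ℕ, a < r → k < d a → ∀ h : psum d a + k < n,
    ((σ ⟨psum d a + k, h⟩ : Fin n) : ℕ) = n - psum d (a + 1) + k

namespace Stmt3Aux

lemma psum_succ (d : ℕ → ℕ) (a : ℕ) : psum d (a + 1) = psum d a + d a :=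
  Finset.sum_range_succ d a

lemma psum_mono (d : ℕ → ℕ) {a b : ℕ} (h : a ≤ b) : psum d a ≤ psum d b :=
  Finset.sum_le_sum_of_subset (Finset.range_subset_range.2 h)

lemma psum_find (d : ℕ → ℕ) : ∀ r m, 0 < m → m ≤ psum d r →
    ∃ a, a < r ∧ psum d a < m ∧ m ≤ psum d (a + 1) := by
  intro r
  induction r with
  | zero => intro m hm h; simp [psum] at h; omega
  | succ r ih =>
    intro m hm h
    by_cases h' : m ≤ psum d r
    · obtain ⟨a, h1, h2, h3⟩ := ih m hm h'
      exact ⟨a, by omega, h2, h3⟩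
    · exact ⟨r, by omega, by omega, h⟩

/-- Block starts computed from a permutation (as a function `g`). -/
def D (n : ℕ) (g : ℕ → ℕ) : ℕ → ℕ
  | 0 => 0
  | a + 1 => D n g a + (n - D n g a - g (D n g a))

lemma blk (n : ℕ) (g : ℕ → ℕ)
    (hg_surj : ∀ v, v < n → ∃ j, j < n ∧ g j = v)
    (hC : ∀ v i j, v + 1 < n → i < n → j < n → g i = v → g j = v + 1 → i < j → j = i + 1)
    (a : ℕ)
    (hinv : ∀ j, j < n → (D n g a ≤ j ↔ g j < n - D n g a)) :
    ∀ k, k < n - D n g a - g (D n g a) → g (D n g a + k) = g (D n g a) + k := by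
  set P := D n g a with hP
  intro k
  induction k using Nat.strong_induction_on with
  | _ k ih =>
    intro hk
    match k, hk with
    | 0, _ => simp
    | (m + 1), hk =>
      have hPn : P < n := by omega
      have hgP : g P < n - P := (hinv P hPn).mp le_rfl
      have hm : g (P + m) = g P + m := ih m (by omega) (by omega)
      have hv1 : g P + m + 1 < n := by omega
      obtain ⟨j, hj, hgj⟩ := hg_surj (g P + m + 1) hv1
      have hjP : P ≤ j := (hinv j hj).mpr (by omega)
      have hne : ∀ k', k' ≤ m → j ≠ P + k' := by
        intro k' hk' hjeq
        have h2 : g (P + k') = g P + k' := ih k' (by omega) (by omega)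
        subst hjeq
        omega
      have hlt : P + m < j := by
        by_contra hcon
        exact hne (j - P) (by omega) (by omega)
      have hPmn : P + m < n := by omega
      have hj1 : j = P + m + 1 := hC (g P + m) (P + m) j hv1 hPmn hj hm hgj hlt
      rw [hj1] at hgj
      simpa [Nat.add_assoc] using hgj

lemma inv (n : ℕ) (g : ℕ → ℕ)
    (hg_lt : ∀ j, j < n → g j < n)
    (hg_inj : ∀ i j, i < n → j < n → g i = g j → i = j)
    (hg_surj : ∀ v, v < n → ∃ j, j < n ∧ g j = v)
    (hC : ∀ v i j, v + 1 < n → i < n → j < n → g i = v → g j = v + 1 → i < j → j = i + 1) :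
    ∀ a, D n g a ≤ n ∧ ∀ j, j < n → (D n g a ≤ j ↔ g j < n - D n g a) := by
  intro a
  induction a with
  | zero =>
    refine ⟨Nat.zero_le n, fun j hj => ?_⟩
    simp only [D]
    constructor
    · intro _; have := hg_lt j hj; omega
    · intro _; omega
  | succ a ih =>
    obtain ⟨hDa, hinv⟩ := ih
    have hblk := blk n g hg_surj hC a hinv
    set P := D n g a with hPdef
    have hd : D n g (a + 1) = P + (n - P - g P) := rfl
    refine ⟨by omega, fun j hj => ?_⟩
    constructor
    · intro hPj
      have hPn : P < n := by omega
      have hgP : g P < n - P := (hinv P hPn).mp le_rfl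
      have hgj : g j < n - P := (hinv j hj).mp (by omega)
      by_contra hcon
      push_neg at hcon
      have hk : g j - g P < n - P - g P := by omega
      have hb := hblk (g j - g P) hk
      have hjn : P + (g j - g P) < n := by omega
      have heq := hg_inj j (P + (g j - g P)) hj hjn (by omega)
      omega
    · intro hgj
      by_contra hcon
      push_neg at hcon
      rcases Nat.lt_or_ge j P with h | h
      · have h2 : ¬ g j < n - P := fun hh => absurd ((hinv j hj).mpr hh) (by omega)
        omega
      · have hPn : P < n := by omega
        have hgP : g P < n - P := (hinv P hPn).mp le_rfl
        have hb := hblk (j - P) (by omega)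
        have hje : P + (j - P) = j := by omega
        rw [hje] at hb
        omega

end Stmt3Aux

/-- A permutation `σ` of `{1,…,n}` satisfies: for every `k ∈ {1,…,n-1}`,
if `σ⁻¹(k) < σ⁻¹(k+1)` then `σ⁻¹(k+1) = σ⁻¹(k) + 1`, if and only if `σ = w_{d_1,…,d_r}`
for some composition `(d_1,…,d_r)` of `n`. (Indices are 0-indexed in this formalization.) -/
theorem stmt3 (n : ℕ) (hn : 2 ≤ n) (σ : Equiv.Perm (Fin n)) :
    (∀ (k : ℕ) (hk : k + 1 < n),
        σ⁻¹ ⟨k, Nat.lt_of_succ_lt hk⟩ < σ⁻¹ ⟨k + 1, hk⟩ →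
        ((σ⁻¹ ⟨k + 1, hk⟩ : Fin n) : ℕ) = ((σ⁻¹ ⟨k, Nat.lt_of_succ_lt hk⟩ : Fin n) : ℕ) + 1) ↔
      ∃ (r : ℕ) (d : ℕ → ℕ), 0 < r ∧ (∀ a < r, 0 < d a) ∧ psum d r = n ∧
        IsBlockPerm n r d σ := by
  classical
  constructor
  · intro H
    set g : ℕ → ℕ := fun j => if h : j < n then ((σ ⟨j, h⟩ : Fin n) : ℕ) else 0 with hg
    have hgdef : ∀ j (h : j < n), g j = ((σ ⟨j, h⟩ : Fin n) : ℕ) := fun j h => dif_pos h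
    have hg_lt : ∀ j, j < n → g j < n := fun j h => by
      rw [hgdef j h]; exact (σ ⟨j, h⟩).isLt
    have hg_inj : ∀ i j, i < n → j < n → g i = g j → i = j := by
      intro i j hi hj hij
      rw [hgdef i hi, hgdef j hj] at hij
      have h2 : σ ⟨i, hi⟩ = σ ⟨j, hj⟩ := Fin.ext hij
      have h3 := σ.injective h2
      simpa using congrArg Fin.val h3
    have hg_surj : ∀ v, v < n → ∃ j, j < n ∧ g j = v := by
      intro v hv
      refine ⟨(σ.symm ⟨v, hv⟩ : Fin n), (σ.symm ⟨v, hv⟩).isLt, ?_⟩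
      rw [hgdef _ (σ.symm ⟨v, hv⟩).isLt]
      simp
    have hC : ∀ v i j, v + 1 < n → i < n → j < n → g i = v → g j = v + 1 → i < j → j = i + 1 := by
      intro v i j hv hi hj hgi hgj hij
      have e1 : σ ⟨i, hi⟩ = ⟨v, Nat.lt_of_succ_lt hv⟩ := Fin.ext (by rw [← hgdef i hi]; exact hgi)
      have e2 : σ ⟨j, hj⟩ = ⟨v + 1, hv⟩ := Fin.ext (by rw [← hgdef j hj]; exact hgj)
      have s1 : σ⁻¹ ⟨v, Nat.lt_of_succ_lt hv⟩ = ⟨i, hi⟩ := by rw [← e1]; simp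
      have s2 : σ⁻¹ ⟨v + 1, hv⟩ = ⟨j, hj⟩ := by rw [← e2]; simp
      have hres := H v hv (by rw [s1, s2]; exact Fin.mk_lt_mk.mpr hij)
      rw [s1, s2] at hres
      exact hres
    have hinv := Stmt3Aux.inv n g hg_lt hg_inj hg_surj hC
    set d : ℕ → ℕ := fun a => n - Stmt3Aux.D n g a - g (Stmt3Aux.D n g a) with hd
    have hDsucc : ∀ a, Stmt3Aux.D n g (a + 1) = Stmt3Aux.D n g a + d a := fun a => rfl
    have hpsum : ∀ a, psum d a = Stmt3Aux.D n g a := by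
      intro a
      induction a with
      | zero => simp [psum, Stmt3Aux.D]
      | succ a ih => rw [Stmt3Aux.psum_succ, ih, hDsucc]
    have hdpos : ∀ a, Stmt3Aux.D n g a < n → 0 < d a := by
      intro a ha
      have h2 := ((hinv a).2 (Stmt3Aux.D n g a) ha).mp le_rfl
      simp only [hd]
      omega
    have key : ∀ a, Stmt3Aux.D n g a ≤ n ∧ (a ≤ Stmt3Aux.D n g a ∨ Stmt3Aux.D n g a = n) := by
      intro a
      induction a with
      | zero => exact ⟨Nat.zero_le n, Or.inl le_rfl⟩
      | succ a ih =>
        have h1 := (hinv (a + 1)).1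
        refine ⟨h1, ?_⟩
        rcases ih.2 with h | h
        · by_cases h2 : Stmt3Aux.D n g a = n
          · right; rw [hDsucc]; simp only [hd]; omega
          · left
            have h3 := hdpos a (by have := ih.1; omega)
            rw [hDsucc]; omega
        · right; rw [hDsucc]; simp only [hd]; omega
    have hex : ∃ a, Stmt3Aux.D n g a = n := ⟨n, by have := key n; omega⟩
    set r := Nat.find hex with hr
    have hDr : Stmt3Aux.D n g r = n := Nat.find_spec hex
    have hrpos : 0 < r := by
      rcases Nat.eq_zero_or_pos r with h | h
      · exfalso; rw [h] at hDr; simp [Stmt3Aux.D] at hDr; omega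
      · exact h
    refine ⟨r, d, hrpos, ?_, ?_, ?_⟩
    · intro a ha
      have hne : Stmt3Aux.D n g a ≠ n := Nat.find_min hex ha
      exact hdpos a (by have := (key a).1; omega)
    · rw [hpsum]; exact hDr
    · intro a k ha hk h
      rw [← hgdef _ h]
      have hDa_lt : Stmt3Aux.D n g a < n := by rw [hpsum] at h; omega
      have hgP : g (Stmt3Aux.D n g a) < n - Stmt3Aux.D n g a :=
        ((hinv a).2 _ hDa_lt).mp le_rfl
      have hb := Stmt3Aux.blk n g hg_surj hC a ((hinv a).2) k (by simpa [hd] using hk)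
      rw [hpsum, hpsum, hDsucc]
      simp only [hd] at hb ⊢
      omega
  · rintro ⟨r, d, hr, hd, hsum, hblk⟩
    intro k hk hlt
    obtain ⟨a, har, h1, h2⟩ := Stmt3Aux.psum_find d r (n - k) (by omega) (by rw [hsum]; omega)
    have hQ : psum d (a + 1) = psum d a + d a := Stmt3Aux.psum_succ d a
    have hQle : psum d (a + 1) ≤ n := by rw [← hsum]; exact Stmt3Aux.psum_mono d har
    set k' := k - (n - psum d (a + 1)) with hk'def
    have hk'lt : k' < d a := by omega
    have hpos : psum d a + k' < n := by omega
    have e1 := hblk a k' har hk'lt hpos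
    have s1 : σ⁻¹ ⟨k, Nat.lt_of_succ_lt hk⟩ = ⟨psum d a + k', hpos⟩ := by
      have e : σ ⟨psum d a + k', hpos⟩ = ⟨k, Nat.lt_of_succ_lt hk⟩ := Fin.ext (by rw [e1]; simp only [Fin.val_mk]; omega)
      rw [← e]; simp
    by_cases hcase : k' + 1 < d a
    · have hpos2 : psum d a + (k' + 1) < n := by omega
      have e2 := hblk a (k' + 1) har hcase hpos2
      have s2 : σ⁻¹ ⟨k + 1, hk⟩ = ⟨psum d a + (k' + 1), hpos2⟩ := by
        have e : σ ⟨psum d a + (k' + 1), hpos2⟩ = ⟨k + 1, hk⟩ := Fin.ext (by rw [e2]; simp only [Fin.val_mk]; omega)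
        rw [← e]; simp
      rw [s1, s2]
      simp only [Fin.val_mk]
      omega
    · exfalso
      have hk1 : k + 1 = n - psum d a := by omega
      have hapos : 0 < a := by
        rcases Nat.eq_zero_or_pos a with h0 | h0
        · subst h0
          have h00 : psum d 0 = 0 := by simp [psum]
          omega
        · exact h0
      obtain ⟨b, rfl⟩ : ∃ b, a = b + 1 := ⟨a - 1, by omega⟩
      have hQb : psum d (b + 1) = psum d b + d b := Stmt3Aux.psum_succ d b
      have hbpos : 0 < d b := hd b (by omega)
      have hposb : psum d b + 0 < n := by omega
      have e3 := hblk b 0 (by omega) hbpos hposb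
      have s2 : σ⁻¹ ⟨k + 1, hk⟩ = ⟨psum d b + 0, hposb⟩ := by
        have e : σ ⟨psum d b + 0, hposb⟩ = ⟨k + 1, hk⟩ := Fin.ext (by rw [e3]; simp only [Fin.val_mk]; omega)
        rw [← e]; simp
      rw [s1, s2] at hlt
      rw [Fin.mk_lt_mk] at hlt
      omega
end

section
/- Fix n ≥ 2. Let σ be a permutation of {1,…,n}, let w be its permutation matrix (the n×n real matrix with entry 1 at position (σ(i), i) for each i and 0 elsewhere), and let t = diag(t_1,…,t_n) be a diagonal real matrix with all t_i nonzero. Let Ū_σ(ℝ) be the set of upper triangular unipotent real matrices ū with ū_{ij} = 0 for every i < j with σ(i) > σ(j). Suppose that for every ū ∈ Ū_σ(ℝ) one has ∑_{k=1}^{n−1} (t w ū w⁻¹ t⁻¹)_{k,k+1} = ∑_{k=1}^{n−1} ū_{k,k+1}. Then there is a composition (d_1,…,d_r) of n such that σ = w_{d_1,…,d_r}, and moreover t_k = t_{k+1} for every k ∈ {1,…,n−1} such that k and k+1 lie in the same interval of the partition of {1,…,n} into consecutive intervals of lengths d_r, d_{r−1}, …, d_1 (read from left to right). -/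
open Matrix

/-- An upper triangular unipotent matrix: `1` on the diagonal and `0` below it. -/
def IsUnipUpper {n : ℕ} (u : Matrix (Fin n) (Fin n) ℝ) : Prop :=
  (∀ i, u i i = 1) ∧ ∀ i j : Fin n, j < i → u i j = 0

/-- The permutation matrix of `σ`: entry `1` at position `(σ(i), i)` for each `i`. -/
def permMat (n : ℕ) (σ : Equiv.Perm (Fin n)) : Matrix (Fin n) (Fin n) ℝ :=
  Matrix.of fun i j => if i = σ j then 1 else 0

/-- The sum `∑_{k=1}^{n-1} M_{k,k+1}` of the superdiagonal entries of `M`. -/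
def superdiagSum {n : ℕ} (M : Matrix (Fin n) (Fin n) ℝ) : ℝ :=
  ∑ i : Fin n, ∑ j : Fin n, if (i : ℕ) + 1 = (j : ℕ) then M i j else 0

lemma permMat_mul_apply {n : ℕ} (σ : Equiv.Perm (Fin n)) (X : Matrix (Fin n) (Fin n) ℝ)
    (a b : Fin n) : (permMat n σ * X) a b = X (σ.symm a) b := by
  rw [Matrix.mul_apply]
  have : ∀ c : Fin n, (permMat n σ) a c * X c b = if c = σ.symm a then X c b else 0 := by
    intro c
    have hiff : (a = σ c) ↔ (c = σ.symm a) := by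
      constructor
      · rintro rfl; simp
      · rintro rfl; simp
    simp only [permMat, Matrix.of_apply]
    by_cases h : c = σ.symm a
    · rw [if_pos h, if_pos (hiff.mpr h), one_mul]
    · rw [if_neg h, if_neg (fun h2 => h (hiff.mp h2)), zero_mul]
  simp [this, Finset.sum_ite_eq']

lemma mul_permMat_apply {n : ℕ} (σ : Equiv.Perm (Fin n)) (X : Matrix (Fin n) (Fin n) ℝ)
    (a b : Fin n) : (X * permMat n σ) a b = X a (σ b) := by
  rw [Matrix.mul_apply]
  have : ∀ c : Fin n, X a c * (permMat n σ) c b = if c = σ b then X a c else 0 := by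
    intro c
    simp only [permMat, Matrix.of_apply]
    by_cases h : c = σ b <;> simp [h]
  simp [this, Finset.sum_ite_eq']

lemma permMat_inv {n : ℕ} (σ : Equiv.Perm (Fin n)) : (permMat n σ)⁻¹ = permMat n σ.symm := by
  apply Matrix.inv_eq_right_inv
  ext a b
  rw [permMat_mul_apply]
  simp only [permMat, Matrix.of_apply, Matrix.one_apply]
  by_cases h : a = b
  · simp [h]
  · have : ¬ (σ.symm a = σ.symm b) := fun hc => h (σ.symm.injective hc)
    simp [h, fun hc : σ.symm a = σ.symm b => h (σ.symm.injective hc)]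

lemma diag_inv {n : ℕ} (t : Fin n → ℝ) (ht : ∀ i, t i ≠ 0) :
    (Matrix.diagonal t)⁻¹ = Matrix.diagonal (fun i => (t i)⁻¹) := by
  apply Matrix.inv_eq_right_inv
  rw [Matrix.diagonal_mul_diagonal]
  convert Matrix.diagonal_one with i
  exact mul_inv_cancel₀ (ht i)

lemma conj_apply {n : ℕ} (σ : Equiv.Perm (Fin n)) (t : Fin n → ℝ) (ht : ∀ i, t i ≠ 0)
    (u : Matrix (Fin n) (Fin n) ℝ) (a b : Fin n) :
    (Matrix.diagonal t * permMat n σ * u * (permMat n σ)⁻¹ * (Matrix.diagonal t)⁻¹) a b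
      = t a * u (σ.symm a) (σ.symm b) * (t b)⁻¹ := by
  rw [permMat_inv, diag_inv t ht, Matrix.mul_diagonal, mul_permMat_apply]
  rw [Matrix.mul_assoc (Matrix.diagonal t) (permMat n σ) u]
  rw [Matrix.diagonal_mul, permMat_mul_apply]


lemma superdiagSum_single {n : ℕ} (M : Matrix (Fin n) (Fin n) ℝ) (x y : Fin n) (v : ℝ)
    (h : ∀ a b : Fin n, (a:ℕ)+1 = (b:ℕ) → M a b = if a = x ∧ b = y then v else 0) :
    superdiagSum M = if (x:ℕ)+1 = (y:ℕ) then v else 0 := by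
  unfold superdiagSum
  have key : ∀ a b : Fin n, (if (a:ℕ)+1 = (b:ℕ) then M a b else 0)
      = if a = x then (if b = y then (if (x:ℕ)+1 = (y:ℕ) then v else 0) else 0) else 0 := by
    intro a b
    by_cases hab : (a:ℕ)+1 = (b:ℕ)
    · rw [if_pos hab, h a b hab]
      by_cases hax : a = x
      · by_cases hby : b = y
        · subst hax; subst hby; simp [hab]
        · simp [hax, hby]
      · simp [hax]
    · rw [if_neg hab]
      by_cases hax : a = x
      · by_cases hby : b = y
        · subst hax; subst hby; simp [hab]
        · simp [hax, hby]
      · simp [hax]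
  simp only [key]
  simp [Finset.sum_ite_eq']

lemma psum_zero (d : ℕ → ℕ) : psum d 0 = 0 := by simp [psum]

lemma psum_succ (d : ℕ → ℕ) (a : ℕ) : psum d (a+1) = psum d a + d a :=
  Finset.sum_range_succ d a

lemma psum_mono (d : ℕ → ℕ) {a b : ℕ} (h : a ≤ b) : psum d a ≤ psum d b :=
  Finset.sum_le_sum_of_subset (Finset.range_subset_range.mpr h)

lemma keyPerm : ∀ n : ℕ, ∀ σ : Equiv.Perm (Fin n),
    (∀ i j : Fin n, (i:ℕ) < (j:ℕ) → ((σ j:ℕ) = (σ i:ℕ) + 1) → (j:ℕ) = (i:ℕ)+1) →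
    ∃ r : ℕ, ∃ d : ℕ → ℕ, (∀ a < r, 0 < d a) ∧ psum d r = n ∧ IsBlockPerm n r d σ ∧
      (0 < n → 0 < r) ∧
      (∀ k : ℕ, k + 1 < n → (∀ a, 1 ≤ a → a < r → k + 1 ≠ n - psum d a) →
        ∀ i j : Fin n, (σ i : ℕ) = k → (σ j : ℕ) = k + 1 → (j:ℕ) = (i:ℕ)+1) := by
  intro n
  induction n using Nat.strong_induction_on with
  | _ n IH =>
  intro σ hQ
  by_cases hn0 : n = 0
  · subst hn0
    exact ⟨0, fun _ => 0, by omega, by simp [psum_zero], fun a k ha => by omega,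
      by omega, fun k hk => by omega⟩
  have h0 : 0 < n := Nat.pos_of_ne_zero hn0
  set m : ℕ := ((σ ⟨0, h0⟩ : Fin n) : ℕ) with hm
  have hmn : m < n := (σ ⟨0, h0⟩).isLt
  have hmle : m ≤ n := le_of_lt hmn
  -- Claim A
  have A : ∀ k, k < n - m → ∀ h : k < n, ((σ ⟨k, h⟩ : Fin n) : ℕ) = m + k := by
    intro k
    induction k using Nat.strong_induction_on with
    | _ k IHk =>
    intro hk h
    match k, hk, h with
    | 0, hk, h => simp [hm]
    | (k+1), hk, h =>
      have hkk : k < n - m := by omega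
      have hkn : k < n := by omega
      have hv1 : m + k + 1 < n := by omega
      set j : Fin n := σ.symm ⟨m + k + 1, hv1⟩ with hj
      have hσj : ((σ j : Fin n) : ℕ) = m + k + 1 := by simp [hj]
      have hjk : (j:ℕ) > k := by
        by_contra hle
        push_neg at hle
        have := IHk (j:ℕ) (by omega) (by omega) j.isLt
        have hj2 : (⟨(j:ℕ), j.isLt⟩ : Fin n) = j := by ext; rfl
        rw [hj2] at this
        omega
      have hQa := hQ ⟨k, hkn⟩ j hjk (by rw [hσj, IHk k (by omega) hkk hkn])
      have hjeq : (j:ℕ) = k + 1 := hQa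
      have : j = ⟨k+1, h⟩ := by ext; exact hjeq
      rw [← this, hσj]
      omega
  -- Claim B
  have B : ∀ i : Fin n, n - m ≤ (i:ℕ) → ((σ i : Fin n) : ℕ) < m := by
    intro i hi
    by_contra hge
    push_neg at hge
    have hl : ((σ i : Fin n) : ℕ) - m < n - m := by
      have := (σ i).isLt; omega
    have hln : ((σ i : Fin n) : ℕ) - m < n := by omega
    have := A _ hl hln
    have heq : σ ⟨((σ i : Fin n) : ℕ) - m, hln⟩ = σ i := by
      ext; rw [this]; omega
    have h3 := σ.injective heq
    have h4 : ((σ i : Fin n) : ℕ) - m = (i:ℕ) := congrArg Fin.val h3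
    omega
  -- the restricted permutation
  have hbound : ∀ x : Fin m, n - m + (x:ℕ) < n := by
    intro x; have := x.isLt; omega
  set f : Fin m → Fin m := fun x => ⟨((σ ⟨n - m + (x:ℕ), hbound x⟩ : Fin n) : ℕ),
    B _ (Nat.le_add_right _ _)⟩ with hf
  have finj : Function.Injective f := by
    intro x y hxy
    rw [hf] at hxy
    simp only [Fin.mk.injEq] at hxy
    have : σ ⟨n - m + (x:ℕ), hbound x⟩ = σ ⟨n - m + (y:ℕ), hbound y⟩ := Fin.ext hxy
    have := σ.injective this
    have h2 : n - m + (x:ℕ) = n - m + (y:ℕ) := congrArg Fin.val this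
    ext; omega
  set σ' : Equiv.Perm (Fin m) := Equiv.ofBijective f (Finite.injective_iff_bijective.mp finj)
    with hσ'
  have hσ'app : ∀ x : Fin m, ((σ' x : Fin m) : ℕ) = ((σ ⟨n - m + (x:ℕ), hbound x⟩ : Fin n) : ℕ) :=
    fun x => rfl
  have hQ' : ∀ i j : Fin m, (i:ℕ) < (j:ℕ) → ((σ' j:ℕ) = (σ' i:ℕ) + 1) → (j:ℕ) = (i:ℕ)+1 := by
    intro i j hij hs
    have := hQ ⟨n - m + (i:ℕ), hbound i⟩ ⟨n - m + (j:ℕ), hbound j⟩ (by simp; omega)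
      (by rw [← hσ'app, ← hσ'app]; exact hs)
    simp at this
    omega
  obtain ⟨r', d', hd'pos, hd'sum, hblock', hr'pos, hlast'⟩ := IH m hmn σ' hQ'
  set d : ℕ → ℕ := fun a => Nat.casesOn a (n - m) (fun b => d' b) with hd
  have hsub : n - m + m = n := Nat.sub_add_cancel hmle
  have hps : ∀ a, psum d (a+1) = (n - m) + psum d' a := by
    intro a
    induction a with
    | zero =>
      rw [psum_succ, psum_zero, psum_zero]
      show 0 + (n - m) = n - m + 0
      omega
    | succ b ihb =>
      rw [psum_succ, ihb]
      show n - m + psum d' b + d' b = n - m + psum d' (b+1)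
      rw [psum_succ]
      omega
  have hmk : ∀ i : Fin n, (⟨(i:ℕ), i.isLt⟩ : Fin n) = i := fun i => Fin.ext rfl
  refine ⟨r' + 1, d, ?_, ?_, ?_, ?_, ?_⟩
  · intro a ha
    cases a with
    | zero => show 0 < n - m; omega
    | succ b => exact hd'pos b (by omega)
  · rw [hps, hd'sum]; omega
  · intro a k ha hk h
    cases a with
    | zero =>
      have hk0 : k < n - m := hk
      have e0 : psum d 0 + k = k := by rw [psum_zero]; omega
      have hkn : k < n := by omega
      have hfin : (⟨psum d 0 + k, h⟩ : Fin n) = ⟨k, hkn⟩ := Fin.ext e0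
      rw [hfin, A k hk0 hkn]
      have h1 : psum d (0+1) = n - m := by
        rw [psum_succ, psum_zero]
        show 0 + (n - m) = n - m
        omega
      omega
    | succ b =>
      have hbr : b < r' := by omega
      have hk' : k < d' b := hk
      have hp := hps b
      have hpk : psum d' b + k < m := by omega
      have hq : psum d' (b+1) ≤ m := by
        rw [← hd'sum]; exact psum_mono d' (by omega)
      have hIdx : (⟨psum d (b+1) + k, h⟩ : Fin n)
          = ⟨n - m + ((⟨psum d' b + k, hpk⟩ : Fin m) : ℕ), hbound _⟩ :=
        Fin.ext (by show psum d (b+1) + k = n - m + (psum d' b + k); omega)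
      rw [hIdx, ← hσ'app ⟨psum d' b + k, hpk⟩, hblock' b k hbr hk' hpk]
      have h2 := hps (b+1)
      omega
  · intro _; omega
  · intro k hk1 hb i j hσi hσj
    have hps1 : psum d 1 = n - m := by
      rw [psum_succ, psum_zero]
      show 0 + (n - m) = n - m
      omega
    rcases lt_trichotomy (k+1) m with hlt | hmid | hgt
    · -- k+1 < m : use the restricted permutation
      have hi_ge : n - m ≤ (i:ℕ) := by
        by_contra h'
        push_neg at h'
        have hAi := A (i:ℕ) (by omega) i.isLt
        rw [hmk i] at hAi
        omega
      have hj_ge : n - m ≤ (j:ℕ) := by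
        by_contra h'
        push_neg at h'
        have hAj := A (j:ℕ) (by omega) j.isLt
        rw [hmk j] at hAj
        omega
      have hi'lt : (i:ℕ) - (n - m) < m := by have := i.isLt; omega
      have hj'lt : (j:ℕ) - (n - m) < m := by have := j.isLt; omega
      set i' : Fin m := ⟨(i:ℕ) - (n - m), hi'lt⟩ with hi'
      set j' : Fin m := ⟨(j:ℕ) - (n - m), hj'lt⟩ with hj'
      have hIi : (⟨n - m + (i':ℕ), hbound i'⟩ : Fin n) = i :=
        Fin.ext (by show n - m + ((i:ℕ) - (n - m)) = (i:ℕ); omega)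
      have hIj : (⟨n - m + (j':ℕ), hbound j'⟩ : Fin n) = j :=
        Fin.ext (by show n - m + ((j:ℕ) - (n - m)) = (j:ℕ); omega)
      have hσ'i : ((σ' i' : Fin m) : ℕ) = k := by rw [hσ'app, hIi]; exact hσi
      have hσ'j : ((σ' j' : Fin m) : ℕ) = k + 1 := by rw [hσ'app, hIj]; exact hσj
      have hbnd' : ∀ a, 1 ≤ a → a < r' → k + 1 ≠ m - psum d' a := by
        intro a ha1 har'
        have hbd := hb (a+1) (by omega) (by omega)
        rw [hps a] at hbd
        have hqa : psum d' a ≤ m := by rw [← hd'sum]; exact psum_mono d' (by omega)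
        intro hcon
        apply hbd
        omega
      have := hlast' k hlt hbnd' i' j' hσ'i hσ'j
      have hij' : (j:ℕ) - (n - m) = (i:ℕ) - (n - m) + 1 := this
      omega
    · -- k+1 = m : excluded boundary
      have hr'0 : 0 < r' := hr'pos (by omega)
      have := hb 1 le_rfl (by omega)
      rw [hps1] at this
      omega
    · -- m < k+1 : inside the first block
      have hi_lt : (i:ℕ) < n - m := by
        by_contra h'
        push_neg at h'
        have := B i h'
        omega
      have hj_lt : (j:ℕ) < n - m := by
        by_contra h'
        push_neg at h'
        have := B j h'
        omega
      have hAi := A (i:ℕ) hi_lt i.isLt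
      have hAj := A (j:ℕ) hj_lt j.isLt
      rw [hmk i] at hAi
      rw [hmk j] at hAj
      omega

lemma factG {n : ℕ} (σ : Equiv.Perm (Fin n)) (t : Fin n → ℝ) (ht : ∀ i, t i ≠ 0)
    (hψ : ∀ u : Matrix (Fin n) (Fin n) ℝ, IsUnipUpper u →
      (∀ i j : Fin n, i < j → σ j < σ i → u i j = 0) →
      superdiagSum
        (Matrix.diagonal t * permMat n σ * u * (permMat n σ)⁻¹ * (Matrix.diagonal t)⁻¹) =
        superdiagSum u) :
    ∀ i j : Fin n, (i:ℕ) < (j:ℕ) → (σ i:ℕ) < (σ j:ℕ) →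
      (((j:ℕ) = (i:ℕ)+1) ↔ ((σ j:ℕ) = (σ i:ℕ)+1)) ∧
      ((σ j:ℕ) = (σ i:ℕ)+1 → t (σ i) = t (σ j)) := by
  intro i j hij hσij
  have hne : i ≠ j := fun h => by subst h; exact lt_irrefl _ hij
  set u : Matrix (Fin n) (Fin n) ℝ := 1 + Matrix.single i j (1:ℝ) with hu
  have huval : ∀ a b : Fin n, u a b
      = (if a = b then (1:ℝ) else 0) + (if i = a ∧ j = b then (1:ℝ) else 0) := by
    intro a b
    simp [hu, Matrix.single, Matrix.one_apply]
  have h1 : IsUnipUpper u := by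
    constructor
    · intro a
      rw [huval]
      have : ¬ (i = a ∧ j = a) := fun ⟨h1, h2⟩ => hne (h1.trans h2.symm)
      simp [this]
    · intro a b hba
      rw [huval]
      have h1 : ¬ (a = b) := fun h => by subst h; exact lt_irrefl _ hba
      have h2 : ¬ (i = a ∧ j = b) := by
        rintro ⟨rfl, rfl⟩
        have : (j:ℕ) < (i:ℕ) := hba
        omega
      simp [h1, h2]
  have h2 : ∀ a b : Fin n, a < b → σ b < σ a → u a b = 0 := by
    intro a b hab hσab
    rw [huval]
    have h1 : ¬ (a = b) := fun h => by subst h; exact lt_irrefl _ hab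
    have h2 : ¬ (i = a ∧ j = b) := by
      rintro ⟨rfl, rfl⟩
      exact absurd hσab (not_lt.mpr (le_of_lt (Fin.lt_def.mpr hσij)))
    simp [h1, h2]
  have heq := hψ u h1 h2
  have hL : superdiagSum
      (Matrix.diagonal t * permMat n σ * u * (permMat n σ)⁻¹ * (Matrix.diagonal t)⁻¹)
      = if ((σ i:ℕ))+1 = ((σ j:ℕ)) then t (σ i) * (t (σ j))⁻¹ else 0 := by
    apply superdiagSum_single _ (σ i) (σ j)
    intro p q hpq
    rw [conj_apply σ t ht, huval]
    have hne2 : ¬ (σ.symm p = σ.symm q) := by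
      intro h
      have : p = q := σ.symm.injective h
      subst this; omega
    by_cases hc : p = σ i ∧ q = σ j
    · obtain ⟨rfl, rfl⟩ := hc
      simp [hne2, hne]
    · have : ¬ (i = σ.symm p ∧ j = σ.symm q) := by
        rintro ⟨h1, h2⟩
        exact hc ⟨by rw [h1]; simp, by rw [h2]; simp⟩
      simp [hne2, this, hc]
  have hR : superdiagSum u = if ((i:ℕ))+1 = ((j:ℕ)) then (1:ℝ) else 0 := by
    apply superdiagSum_single _ i j
    intro p q hpq
    rw [huval]
    have hpq1 : ¬ (p = q) := fun h => by subst h; omega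
    by_cases hc : p = i ∧ q = j
    · obtain ⟨rfl, rfl⟩ := hc; simp [hpq1]
    · have : ¬ (i = p ∧ j = q) := fun ⟨x, y⟩ => hc ⟨x.symm, y.symm⟩
      simp [hpq1, this, hc]
  rw [hL, hR] at heq
  constructor
  · constructor
    · intro hji
      by_contra hσ
      rw [if_neg (by omega), if_pos (by omega)] at heq
      exact one_ne_zero heq.symm
    · intro hσ
      by_contra hji
      rw [if_pos (by omega), if_neg (by omega)] at heq
      exact (mul_ne_zero (ht (σ i)) (inv_ne_zero (ht (σ j)))) heq
  · intro hσ
    rw [if_pos (by omega)] at heq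
    have hji : (j:ℕ) = (i:ℕ)+1 := by
      by_contra hji
      rw [if_neg (by omega)] at heq
      exact (mul_ne_zero (ht (σ i)) (inv_ne_zero (ht (σ j)))) heq
    rw [if_pos (by omega)] at heq
    field_simp at heq
    rwa [div_eq_one_iff_eq (ht (σ j))] at heq

/-- Let `w` be the permutation matrix of `σ` and `t = diag(t_1,…,t_n)` with all
`t_i ≠ 0`.  If `∑_k (t w ū w⁻¹ t⁻¹)_{k,k+1} = ∑_k ū_{k,k+1}` for every `ū ∈ Ū_σ(ℝ)` (upper
triangular unipotent with `ū_{ij} = 0` whenever `i < j` and `σ(i) > σ(j)`), then `σ =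
w_{d_1,…,d_r}` for some composition of `n`, and `t_k = t_{k+1}` whenever `k, k+1` lie in the
same interval of the partition of `{1,…,n}` into consecutive intervals of lengths
`d_r, d_{r-1}, …, d_1` (equivalently, whenever `k ∉ {n - D_a : 1 ≤ a ≤ r-1}`; in the 0-indexed
formalization below, `k` corresponds to `k₀ + 1`). -/
theorem stmt4 (n : ℕ) (hn : 2 ≤ n) (σ : Equiv.Perm (Fin n)) (t : Fin n → ℝ)
    (ht : ∀ i, t i ≠ 0)
    (hψ : ∀ u : Matrix (Fin n) (Fin n) ℝ, IsUnipUpper u →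
      (∀ i j : Fin n, i < j → σ j < σ i → u i j = 0) →
      superdiagSum
        (Matrix.diagonal t * permMat n σ * u * (permMat n σ)⁻¹ * (Matrix.diagonal t)⁻¹) =
        superdiagSum u) :
    ∃ (r : ℕ) (d : ℕ → ℕ), 0 < r ∧ (∀ a < r, 0 < d a) ∧ psum d r = n ∧
      IsBlockPerm n r d σ ∧
      ∀ (k : ℕ) (hk : k + 1 < n), (∀ a, 1 ≤ a → a < r → k + 1 ≠ n - psum d a) →
        t ⟨k, Nat.lt_of_succ_lt hk⟩ = t ⟨k + 1, hk⟩ := by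
  have hQ : ∀ i j : Fin n, (i:ℕ) < (j:ℕ) → ((σ j:ℕ) = (σ i:ℕ) + 1) → (j:ℕ) = (i:ℕ)+1 := by
    intro i j hij hs
    have hσlt : ((σ i : Fin n):ℕ) < ((σ j : Fin n):ℕ) := by omega
    exact ((factG σ t ht hψ i j hij hσlt).1).mpr hs
  obtain ⟨r, d, hdpos, hdsum, hblock, hrpos, hlast⟩ := keyPerm n σ hQ
  refine ⟨r, d, hrpos (by omega), hdpos, hdsum, hblock, ?_⟩
  intro k hk hbk
  set i : Fin n := σ.symm ⟨k, Nat.lt_of_succ_lt hk⟩ with hi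
  set j : Fin n := σ.symm ⟨k+1, hk⟩ with hj
  have hσi : ((σ i : Fin n) : ℕ) = k := by rw [hi, Equiv.apply_symm_apply]
  have hσj : ((σ j : Fin n) : ℕ) = k + 1 := by rw [hj, Equiv.apply_symm_apply]
  have hji := hlast k hk hbk i j hσi hσj
  have hij : (i:ℕ) < (j:ℕ) := by omega
  have hσlt : ((σ i : Fin n):ℕ) < ((σ j : Fin n):ℕ) := by omega
  have hteq := (factG σ t ht hψ i j hij hσlt).2 (by omega)
  rw [hi, Equiv.apply_symm_apply] at hteq
  rw [hj, Equiv.apply_symm_apply] at hteq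
  exact hteq
end

section
/- Fix n ≥ 2 and let (d_1,…,d_r) be a composition of n. For t ∈ {1,…,n−d_r} let a(t) be the unique index a with D_{a−1} < t ≤ D_a, and let V_t denote the word s_t s_{t+1} ⋯ s_{t+(n−D_{a(t)})−1} in the adjacent transpositions s_i = (i, i+1) of the symmetric group S_n. Then the concatenated word V_{n−d_r} V_{n−d_r−1} ⋯ V_1, with letters applied from left to right (i.e. the leftmost transposition is applied first), is a reduced expression for w_{d_1,…,d_r}: its product equals w_{d_1,…,d_r}, and its total number of letters, ∑_{t=1}^{n−d_r} (n − D_{a(t)}) = ∑_{1 ≤ a < b ≤ r} d_a d_b, equals the number of inversions of w_{d_1,…,d_r}. -/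
/-- The number of inversions of a permutation of `Fin n`. -/
def invCount {n : ℕ} (σ : Equiv.Perm (Fin n)) : ℕ :=
  (Finset.univ.filter fun p : Fin n × Fin n => p.1 < p.2 ∧ σ p.2 < σ p.1).card

/-- The adjacent transposition swapping the (0-indexed) points `i` and `i+1` of `Fin n`;
in 1-indexed notation this is `s_{i+1}`.  (Junk value `1` if `i+1 ≥ n`.) -/
def adjSwap (n i : ℕ) : Equiv.Perm (Fin n) :=
  if h : i + 1 < n then Equiv.swap ⟨i, Nat.lt_of_succ_lt h⟩ ⟨i + 1, h⟩ else 1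

/-- The row word `V_t = s_t s_{t+1} ⋯ s_{t+(n-D_{a(t)})-1}` (1-indexed letters `s_m`, i.e.
`adjSwap n (m-1)`), as a list with the leftmost letter first. -/
def rowWord (n : ℕ) (d : ℕ → ℕ) (aIdx : ℕ → ℕ) (t : ℕ) : List (Equiv.Perm (Fin n)) :=
  (List.range (n - psum d (aIdx t))).map fun m => adjSwap n (t - 1 + m)

/-- The concatenated word `V_{n-d_r} V_{n-d_r-1} ⋯ V_1`, leftmost letter first. -/
def fullWord (n r : ℕ) (d : ℕ → ℕ) (aIdx : ℕ → ℕ) : List (Equiv.Perm (Fin n)) :=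
  ((List.range (n - d (r - 1))).map fun u => rowWord n d aIdx (n - d (r - 1) - u)).flatten


namespace Stmt8

lemma psum_succ (d : ℕ → ℕ) (a : ℕ) : psum d (a+1) = psum d a + d a :=
  Finset.sum_range_succ d a

lemma psum_mono (d : ℕ → ℕ) {a b : ℕ} (h : a ≤ b) : psum d a ≤ psum d b :=
  Finset.sum_le_sum_of_subset (Finset.range_subset_range.mpr h)

/-- The (0-indexed) block index of a point `x`. -/
def blk (d : ℕ → ℕ) (r x : ℕ) : ℕ := Nat.findGreatest (fun a => psum d a ≤ x) (r-1)

lemma blk_spec {n r : ℕ} {d : ℕ → ℕ} (hr : 0 < r) (hsum : psum d r = n) {x : ℕ} (hx : x < n) :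
    blk d r x < r ∧ psum d (blk d r x) ≤ x ∧ x < psum d (blk d r x + 1) := by
  have h1 : blk d r x ≤ r - 1 := Nat.findGreatest_le _
  have h2 : psum d (blk d r x) ≤ x :=
    Nat.findGreatest_spec (P := fun a => psum d a ≤ x) (m := 0) (Nat.zero_le _)
      (by simp [psum])
  refine ⟨by omega, h2, ?_⟩
  by_cases hb : blk d r x = r - 1
  · have : blk d r x + 1 = r := by omega
    rw [this, hsum]; exact hx
  · have h3 : ¬ psum d (blk d r x + 1) ≤ x :=
      Nat.findGreatest_is_greatest (P := fun a => psum d a ≤ x)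
        (Nat.lt_succ_self _) (by omega)
    omega

lemma blk_unique {n r : ℕ} {d : ℕ → ℕ} (hr : 0 < r) (hsum : psum d r = n) {x b : ℕ}
    (hx : x < n) (hb : b < r) (h1 : psum d b ≤ x) (h2 : x < psum d (b+1)) :
    blk d r x = b := by
  obtain ⟨B1, B2, B3⟩ := blk_spec hr hsum hx
  rcases lt_trichotomy (blk d r x) b with h|h|h
  · have := psum_mono d (show blk d r x + 1 ≤ b from h); omega
  · exact h
  · have := psum_mono d (show b + 1 ≤ blk d r x from h); omega

lemma adjSwap_apply {n : ℕ} (i : ℕ) (h : i + 1 < n) (x : Fin n) :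
    ((adjSwap n i) x : ℕ) =
      if (x:ℕ) = i then i+1 else if (x:ℕ) = i+1 then i else (x:ℕ) := by
  unfold adjSwap
  rw [dif_pos h, Equiv.swap_apply_def]
  split_ifs with h1 h2 h3 h4 h5 <;>
    simp_all [Fin.ext_iff]

lemma cyc_apply {n : ℕ} (s : ℕ) : ∀ (L : ℕ), s + L < n → ∀ x : Fin n,
    ((((List.range L).map fun m => adjSwap n (s + m)).reverse.prod) x : ℕ) =
      if (x:ℕ) = s then s + L
      else if s < (x:ℕ) ∧ (x:ℕ) ≤ s + L then (x:ℕ) - 1 else (x:ℕ) := by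
  intro L
  induction L with
  | zero =>
    intro h x
    simp only [List.range_zero, List.map_nil, List.reverse_nil, List.prod_nil,
      Equiv.Perm.one_apply]
    split_ifs <;> omega
  | succ L ih =>
    intro h x
    rw [List.range_succ, List.map_append, List.reverse_append]
    simp only [List.map_cons, List.map_nil, List.reverse_cons, List.reverse_nil,
      List.nil_append, List.singleton_append, List.prod_cons, Equiv.Perm.mul_apply]
    have hL : s + L < n := by omega
    have hx := ih hL x
    rw [adjSwap_apply (s + L) (by omega)]
    rw [hx]
    have := x.isLt
    split_ifs <;> omega

/-- The invariant: after applying the rows `V_{n-d_r}, …, V_{j+1}` (in this order), the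
resulting permutation fixes the points `< j` and acts on the remaining points as the block
anti-diagonal permutation of the truncated composition. -/
def Inv (n r j : ℕ) (d : ℕ → ℕ) (π : Equiv.Perm (Fin n)) : Prop :=
  (∀ x : Fin n, (x:ℕ) < j → π x = x) ∧
  ∀ b k : ℕ, b < r → k < d b → ∀ h : psum d b + k < n, j ≤ psum d b + k →
    ((π ⟨psum d b + k, h⟩ : Fin n) : ℕ) =
      n + j - psum d (b+1) + (psum d b + k - max (psum d b) j)

lemma step {n r : ℕ} {d : ℕ → ℕ} (hr : 0 < r) (hsum : psum d r = n)
    (aIdx : ℕ → ℕ)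
    (haIdx : ∀ t, 1 ≤ t → t ≤ n - d (r - 1) →
      1 ≤ aIdx t ∧ aIdx t ≤ r ∧ psum d (aIdx t - 1) < t ∧ t ≤ psum d (aIdx t))
    (t : ℕ) (ht1 : 1 ≤ t) (ht2 : t ≤ n - d (r-1)) {π : Equiv.Perm (Fin n)}
    (hπ : Inv n r t d π) :
    Inv n r (t-1) d ((rowWord n d aIdx t).reverse.prod * π) := by
  have hN : psum d (r-1) = n - d (r-1) := by
    have h1 := psum_succ d (r-1)
    rw [show r - 1 + 1 = r by omega, hsum] at h1
    omega
  obtain ⟨ha1, ha2, ha3, ha4⟩ := haIdx t ht1 ht2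
  have ha5 : aIdx t - 1 < r - 1 := by
    by_contra hc
    have := psum_mono d (show r - 1 ≤ aIdx t - 1 by omega)
    omega
  have hDa1n : psum d (aIdx t) ≤ n := hsum ▸ psum_mono d (by omega)
  set a1 := aIdx t with ha1def
  have hsL : (t-1) + (n - psum d a1) < n := by omega
  have key : ∀ x : Fin n, (((rowWord n d aIdx t).reverse.prod) x : ℕ) =
      if (x:ℕ) = t-1 then (t-1) + (n - psum d a1)
      else if t-1 < (x:ℕ) ∧ (x:ℕ) ≤ (t-1) + (n - psum d a1) then (x:ℕ) - 1 else (x:ℕ) :=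
    fun x => cyc_apply (t-1) (n - psum d a1) hsL x
  constructor
  · intro x hx
    have h1 : π x = x := hπ.1 x (by omega)
    apply Fin.ext
    rw [Equiv.Perm.mul_apply, h1, key x]
    have := x.isLt
    split_ifs <;> omega
  · intro b k hb hk h hjx
    have hb1 : psum d (b+1) = psum d b + d b := psum_succ d b
    have hb2 : psum d (b+1) ≤ n := hsum ▸ psum_mono d hb
    have hcase : (b + 1 = a1 ∧ psum d (b+1) = psum d a1 ∧ psum d b = psum d (a1-1)) ∨
        psum d a1 ≤ psum d b := by
      by_cases hba : a1 ≤ b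
      · exact Or.inr (psum_mono d hba)
      · have hge : ¬ (b + 1 ≤ a1 - 1) := by
          intro hc
          have := psum_mono d hc
          omega
        have he : b + 1 = a1 := by omega
        exact Or.inl ⟨he, by rw [he], by rw [show b = a1 - 1 by omega]⟩
    rw [Equiv.Perm.mul_apply]
    by_cases hx : t ≤ psum d b + k
    · have hv := hπ.2 b k hb hk h hx
      rw [key (π ⟨psum d b + k, h⟩), hv]
      split_ifs <;> omega
    · have h1 : π ⟨psum d b + k, h⟩ = ⟨psum d b + k, h⟩ :=
        hπ.1 _ (by show psum d b + k < t; omega)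
      rw [h1, key ⟨psum d b + k, h⟩]
      simp only [Fin.val_mk]
      split_ifs <;> omega

lemma inv_partial {n r : ℕ} {d : ℕ → ℕ} (hr : 0 < r) (hsum : psum d r = n)
    (aIdx : ℕ → ℕ)
    (haIdx : ∀ t, 1 ≤ t → t ≤ n - d (r - 1) →
      1 ≤ aIdx t ∧ aIdx t ≤ r ∧ psum d (aIdx t - 1) < t ∧ t ≤ psum d (aIdx t)) :
    ∀ u, u ≤ n - d (r-1) →
      Inv n r (n - d (r-1) - u) d
        (((List.range u).map fun u' =>
          rowWord n d aIdx (n - d (r-1) - u')).flatten.reverse.prod) := by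
  have hN : psum d (r-1) = n - d (r-1) := by
    have h1 := psum_succ d (r-1)
    rw [show r - 1 + 1 = r by omega, hsum] at h1
    omega
  intro u
  induction u with
  | zero =>
    intro _
    simp only [List.range_zero, List.map_nil, List.flatten_nil, List.reverse_nil,
      List.prod_nil, Nat.sub_zero]
    constructor
    · intro x _; rfl
    · intro b k hb hk h hjx
      have hb1 : psum d (b+1) = psum d b + d b := psum_succ d b
      have hb2 : psum d (b+1) ≤ n := hsum ▸ psum_mono d hb
      have hcase : psum d (b+1) ≤ psum d (r-1) ∨
          (b = r - 1 ∧ psum d (b+1) = n ∧ psum d b = psum d (r-1)) := by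
        by_cases hbr : b < r - 1
        · exact Or.inl (psum_mono d hbr)
        · have he : b = r - 1 := by omega
          exact Or.inr ⟨he, by rw [he, show r - 1 + 1 = r by omega, hsum],
            by rw [he]⟩
      simp only [Equiv.Perm.one_apply]
      show psum d b + k = _
      omega
  | succ u ih =>
    intro hu
    rw [List.range_succ, List.map_append, List.flatten_append, List.reverse_append,
      List.prod_append]
    simp only [List.map_cons, List.map_nil, List.flatten_cons, List.flatten_nil,
      List.append_nil]
    have h1 : n - d (r-1) - (u+1) = (n - d (r-1) - u) - 1 := by omega
    rw [h1]
    exact step hr hsum aIdx haIdx (n - d (r-1) - u) (by omega) (by omega) (ih (by omega))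

lemma prod_eq {n r : ℕ} {d : ℕ → ℕ} (hr : 0 < r) (hsum : psum d r = n)
    (σ : Equiv.Perm (Fin n)) (hσ : IsBlockPerm n r d σ)
    (aIdx : ℕ → ℕ)
    (haIdx : ∀ t, 1 ≤ t → t ≤ n - d (r - 1) →
      1 ≤ aIdx t ∧ aIdx t ≤ r ∧ psum d (aIdx t - 1) < t ∧ t ≤ psum d (aIdx t)) :
    (fullWord n r d aIdx).reverse.prod = σ := by
  have hI := inv_partial hr hsum aIdx haIdx (n - d (r-1)) le_rfl
  rw [Nat.sub_self] at hI
  have hfull : (fullWord n r d aIdx).reverse.prod =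
      ((List.range (n - d (r-1))).map fun u' =>
        rowWord n d aIdx (n - d (r-1) - u')).flatten.reverse.prod := rfl
  rw [hfull]
  apply Equiv.ext
  intro x
  obtain ⟨hb, h1, h2⟩ := blk_spec hr hsum x.isLt
  set b := blk d r (x:ℕ)
  have hk : (x:ℕ) - psum d b < d b := by
    have := psum_succ d b
    omega
  have hx : x = ⟨psum d b + ((x:ℕ) - psum d b), by omega⟩ := Fin.ext (by simp; omega)
  rw [hx]
  apply Fin.ext
  rw [hσ b _ hb hk _, hI.2 b _ hb hk _ (by omega)]
  omega

lemma list_sum_range (f : ℕ → ℕ) :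
    ∀ N, ((List.range N).map f).sum = ∑ i ∈ Finset.range N, f i := by
  intro N
  induction N with
  | zero => simp
  | succ N ih =>
    rw [List.range_succ, List.map_append, List.sum_append, Finset.sum_range_succ, ih]
    simp

lemma len1 {n r : ℕ} {d : ℕ → ℕ} (aIdx : ℕ → ℕ) :
    (fullWord n r d aIdx).length =
      ∑ u ∈ Finset.range (n - d (r-1)), (n - psum d (aIdx (n - d (r-1) - u))) := by
  unfold fullWord
  rw [List.length_flatten, List.map_map]
  have : (List.length ∘ fun u => rowWord n d aIdx (n - d (r - 1) - u)) =
      fun u => n - psum d (aIdx (n - d (r-1) - u)) := by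
    funext u
    simp [rowWord]
  rw [this, list_sum_range]

lemma sum_reflect (f : ℕ → ℕ) (N : ℕ) :
    ∑ u ∈ Finset.range N, f (N - u) = ∑ t ∈ Finset.Icc 1 N, f t := by
  refine Finset.sum_nbij' (fun u => N - u) (fun t => N - t) ?_ ?_ ?_ ?_ ?_ <;>
    intro a ha <;> simp only [Finset.mem_range, Finset.mem_Icc] at * <;> omega

lemma blk_last {n r : ℕ} {d : ℕ → ℕ} (hr : 0 < r) (hsum : psum d r = n) {i : ℕ}
    (h1 : psum d (r-1) ≤ i) (h2 : i < n) : blk d r i = r - 1 := by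
  obtain ⟨B1, B2, B3⟩ := blk_spec hr hsum h2
  by_contra hc
  have hle : blk d r i + 1 ≤ r - 1 := by omega
  have := psum_mono d hle
  omega

lemma sum_blocks {n r : ℕ} {d : ℕ → ℕ} (hr : 0 < r) (hsum : psum d r = n) :
    ∀ m, m ≤ r → ∑ i ∈ Finset.range (psum d m), (n - psum d (blk d r i + 1))
      = ∑ a ∈ Finset.range m, d a * (n - psum d (a+1)) := by
  intro m
  induction m with
  | zero => simp [psum]
  | succ m ih =>
    intro hm
    have hmono : psum d m ≤ psum d (m+1) := psum_mono d (by omega)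
    have hn1 : psum d (m+1) ≤ n := hsum ▸ psum_mono d hm
    rw [Finset.range_eq_Ico, ← Finset.sum_Ico_consecutive _ (Nat.zero_le (psum d m)) hmono,
      ← Finset.range_eq_Ico, ih (by omega), Finset.sum_range_succ]
    congr 1
    have hconst : ∀ i ∈ Finset.Ico (psum d m) (psum d (m+1)),
        (n - psum d (blk d r i + 1)) = n - psum d (m+1) := by
      intro i hi
      simp only [Finset.mem_Ico] at hi
      rw [blk_unique hr hsum (by omega) (by omega) hi.1 hi.2]
    rw [Finset.sum_congr rfl hconst, Finset.sum_const, Nat.card_Ico, smul_eq_mul]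
    have := psum_succ d m
    have h2 : psum d (m+1) - psum d m = d m := by omega
    rw [h2]

lemma sum_extend {n r : ℕ} {d : ℕ → ℕ} (hr : 0 < r) (hsum : psum d r = n) :
    ∑ i ∈ Finset.range (psum d (r-1)), (n - psum d (blk d r i + 1))
      = ∑ i ∈ Finset.range n, (n - psum d (blk d r i + 1)) := by
  apply Finset.sum_subset
  · exact Finset.range_subset_range.mpr (hsum ▸ psum_mono d (by omega))
  · intro i hi hni
    simp only [Finset.mem_range] at hi hni
    rw [blk_last hr hsum (by omega) hi, show r - 1 + 1 = r by omega, hsum]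
    omega

lemma sum_Ioo {n r : ℕ} {d : ℕ → ℕ} (hsum : psum d r = n) {a : ℕ} (ha : a < r) :
    ∑ b ∈ Finset.Ioo a r, d a * d b = d a * (n - psum d (a+1)) := by
  rw [← Finset.mul_sum]
  congr 1
  have h1 : psum d (a+1) + ∑ b ∈ Finset.Ico (a+1) r, d b = psum d r := by
    unfold psum
    rw [Finset.range_eq_Ico, Finset.range_eq_Ico]
    exact Finset.sum_Ico_consecutive d (Nat.zero_le (a+1)) (by omega : a + 1 ≤ r)
  rw [← Finset.Ico_add_one_left_eq_Ioo]
  omega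

lemma aIdx_eq {n r : ℕ} {d : ℕ → ℕ} (hr : 0 < r) (hsum : psum d r = n) (aIdx : ℕ → ℕ)
    (haIdx : ∀ t, 1 ≤ t → t ≤ n - d (r - 1) →
      1 ≤ aIdx t ∧ aIdx t ≤ r ∧ psum d (aIdx t - 1) < t ∧ t ≤ psum d (aIdx t))
    {t : ℕ} (ht1 : 1 ≤ t) (ht2 : t ≤ n - d (r-1)) :
    psum d (aIdx t) = psum d (blk d r (t-1) + 1) := by
  obtain ⟨h1, h2, h3, h4⟩ := haIdx t ht1 ht2
  have ha5 : aIdx t - 1 < r := by omega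
  have hs : psum d (aIdx t - 1 + 1) = psum d (aIdx t) := by
    rw [show aIdx t - 1 + 1 = aIdx t by omega]
  have htn : t - 1 < n := by
    have : psum d (r-1) ≤ n := hsum ▸ psum_mono d (by omega)
    omega
  rw [blk_unique hr hsum htn ha5 (by omega)
    (by omega : t - 1 < psum d (aIdx t - 1 + 1)), hs]

lemma len2 {n r : ℕ} {d : ℕ → ℕ} (hr : 0 < r) (hsum : psum d r = n) (aIdx : ℕ → ℕ)
    (haIdx : ∀ t, 1 ≤ t → t ≤ n - d (r - 1) →
      1 ≤ aIdx t ∧ aIdx t ≤ r ∧ psum d (aIdx t - 1) < t ∧ t ≤ psum d (aIdx t)) :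
    ∑ t ∈ Finset.Icc 1 (n - d (r-1)), (n - psum d (aIdx t)) =
      ∑ i ∈ Finset.range (n - d (r-1)), (n - psum d (blk d r i + 1)) := by
  refine Finset.sum_nbij' (fun t => t - 1) (fun i => i + 1) ?_ ?_ ?_ ?_ ?_ <;>
    intro a ha <;> simp only [Finset.mem_range, Finset.mem_Icc] at ha ⊢
  · omega
  · omega
  · omega
  · omega
  · rw [aIdx_eq hr hsum aIdx haIdx ha.1 ha.2]

lemma sigma_val {n r : ℕ} {d : ℕ → ℕ} (hr : 0 < r) (hsum : psum d r = n)
    {σ : Equiv.Perm (Fin n)} (hσ : IsBlockPerm n r d σ) (x : Fin n) :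
    (σ x : ℕ) = n - psum d (blk d r (x:ℕ) + 1) + ((x:ℕ) - psum d (blk d r (x:ℕ))) := by
  obtain ⟨B1, B2, B3⟩ := blk_spec hr hsum x.isLt
  have hk : (x:ℕ) - psum d (blk d r (x:ℕ)) < d (blk d r (x:ℕ)) := by
    have := psum_succ d (blk d r (x:ℕ))
    omega
  have hx : x = ⟨psum d (blk d r (x:ℕ)) + ((x:ℕ) - psum d (blk d r (x:ℕ))), by omega⟩ :=
    Fin.ext (by simp; omega)
  conv_lhs => rw [hx]
  rw [hσ _ _ B1 hk _]

lemma inv_iff {n r : ℕ} {d : ℕ → ℕ} (hr : 0 < r) (hsum : psum d r = n)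
    {σ : Equiv.Perm (Fin n)} (hσ : IsBlockPerm n r d σ) (p : Fin n × Fin n) :
    (p.1 < p.2 ∧ σ p.2 < σ p.1) ↔ blk d r (p.1 : ℕ) < blk d r (p.2 : ℕ) := by
  obtain ⟨A1, A2, A3⟩ := blk_spec hr hsum p.1.isLt
  obtain ⟨B1, B2, B3⟩ := blk_spec hr hsum p.2.isLt
  have h1 := sigma_val hr hsum hσ p.1
  have h2 := sigma_val hr hsum hσ p.2
  have hs1 := psum_succ d (blk d r (p.1 : ℕ))
  have hs2 := psum_succ d (blk d r (p.2 : ℕ))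
  have hn1 : psum d (blk d r (p.1:ℕ) + 1) ≤ n := by
    have h : psum d (blk d r (p.1:ℕ) + 1) ≤ psum d r := psum_mono d A1
    omega
  have hn2 : psum d (blk d r (p.2:ℕ) + 1) ≤ n := by
    have h : psum d (blk d r (p.2:ℕ) + 1) ≤ psum d r := psum_mono d B1
    omega
  have tri : (blk d r (p.1:ℕ) < blk d r (p.2:ℕ) ∧
        psum d (blk d r (p.1:ℕ) + 1) ≤ psum d (blk d r (p.2:ℕ))) ∨
      (blk d r (p.1:ℕ) = blk d r (p.2:ℕ) ∧
        psum d (blk d r (p.1:ℕ)) = psum d (blk d r (p.2:ℕ)) ∧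
        psum d (blk d r (p.1:ℕ) + 1) = psum d (blk d r (p.2:ℕ) + 1)) ∨
      (blk d r (p.2:ℕ) < blk d r (p.1:ℕ) ∧
        psum d (blk d r (p.2:ℕ) + 1) ≤ psum d (blk d r (p.1:ℕ))) := by
    rcases lt_trichotomy (blk d r (p.1:ℕ)) (blk d r (p.2:ℕ)) with h|h|h
    · exact Or.inl ⟨h, psum_mono d h⟩
    · exact Or.inr (Or.inl ⟨h, by rw [h], by rw [h]⟩)
    · exact Or.inr (Or.inr ⟨h, psum_mono d h⟩)
  simp only [Fin.lt_def, h1, h2]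
  omega

lemma card_ge {n : ℕ} (c : ℕ) (hc : c ≤ n) :
    (Finset.univ.filter fun y : Fin n => c ≤ (y:ℕ)).card = n - c := by
  by_cases h : c < n
  · have he : (Finset.univ.filter fun y : Fin n => c ≤ (y:ℕ)) =
        Finset.Ici (⟨c, h⟩ : Fin n) := by
      ext y
      simp [Fin.le_def]
    rw [he, Fin.card_Ici]
  · have hcn : c = n := by omega
    have he : (Finset.univ.filter fun y : Fin n => c ≤ (y:ℕ)) = ∅ := by
      ext y
      simp only [Finset.mem_filter, Finset.mem_univ, true_and, Finset.notMem_empty,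
        iff_false]
      have := y.isLt
      omega
    rw [he]
    simp [hcn]

lemma invCount_eq {n r : ℕ} {d : ℕ → ℕ} (hr : 0 < r) (hsum : psum d r = n)
    {σ : Equiv.Perm (Fin n)} (hσ : IsBlockPerm n r d σ) :
    invCount σ = ∑ i ∈ Finset.range n, (n - psum d (blk d r i + 1)) := by
  unfold invCount
  have hfe : (Finset.univ.filter fun p : Fin n × Fin n => p.1 < p.2 ∧ σ p.2 < σ p.1)
      = Finset.univ.filter fun p : Fin n × Fin n =>
        blk d r (p.1:ℕ) < blk d r (p.2:ℕ) := by
    apply Finset.filter_congr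
    intro p _
    exact inv_iff hr hsum hσ p
  rw [hfe]
  rw [Finset.card_eq_sum_card_fiberwise (f := Prod.fst) (t := Finset.univ)
    (fun x _ => Finset.mem_univ _)]
  rw [← Fin.sum_univ_eq_sum_range (fun i => n - psum d (blk d r i + 1)) n]
  apply Finset.sum_congr rfl
  intro x _
  have hcard : ((Finset.univ.filter fun p : Fin n × Fin n =>
      blk d r (p.1:ℕ) < blk d r (p.2:ℕ)).filter fun p => p.1 = x).card
      = (Finset.univ.filter fun y : Fin n => blk d r (x:ℕ) < blk d r (y:ℕ)).card := by
    apply Finset.card_nbij' (i := fun p => p.2) (j := fun y => (x, y))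
    · intro p hp
      simp only [Finset.mem_coe, Finset.mem_filter, Finset.mem_univ, true_and] at hp ⊢
      rw [← hp.2]; exact hp.1
    · intro y hy
      simp only [Finset.mem_coe, Finset.mem_filter, Finset.mem_univ, true_and] at hy ⊢
      exact ⟨hy, trivial⟩
    · intro p hp
      simp only [Finset.mem_coe, Finset.mem_filter, Finset.mem_univ, true_and] at hp
      rw [← hp.2]
    · intro y _
      rfl
  rw [hcard]
  obtain ⟨B1, B2, B3⟩ := blk_spec hr hsum x.isLt
  have hgt : (Finset.univ.filter fun y : Fin n => blk d r (x:ℕ) < blk d r (y:ℕ))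
      = Finset.univ.filter fun y : Fin n => psum d (blk d r (x:ℕ) + 1) ≤ (y:ℕ) := by
    apply Finset.filter_congr
    intro y _
    obtain ⟨C1, C2, C3⟩ := blk_spec hr hsum y.isLt
    constructor
    · intro h
      calc psum d (blk d r (x:ℕ) + 1) ≤ psum d (blk d r (y:ℕ)) := psum_mono d h
        _ ≤ (y:ℕ) := C2
    · intro h
      by_contra hc
      have : psum d (blk d r (y:ℕ) + 1) ≤ psum d (blk d r (x:ℕ) + 1) :=
        psum_mono d (by omega)
      omega
  rw [hgt, card_ge _ (by
    have h : psum d (blk d r (x:ℕ) + 1) ≤ psum d r := psum_mono d B1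
    omega)]

end Stmt8

/-- With `a(t)` the unique index with `D_{a(t)-1} < t ≤ D_{a(t)}`, the word
`V_{n-d_r} ⋯ V_1` (letters applied from left to right, so the composite permutation is the
product of the reversed list) is a reduced expression for `w_{d_1,…,d_r}`: its product is
`w_{d_1,…,d_r}` and its number of letters `∑_t (n - D_{a(t)}) = ∑_{a<b} d_a d_b` equals the
number of inversions. -/
theorem stmt8 (n : ℕ) (hn : 2 ≤ n) (r : ℕ) (hr : 0 < r) (d : ℕ → ℕ)
    (hd : ∀ a < r, 0 < d a) (hsum : psum d r = n)
    (σ : Equiv.Perm (Fin n)) (hσ : IsBlockPerm n r d σ)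
    (aIdx : ℕ → ℕ)
    (haIdx : ∀ t, 1 ≤ t → t ≤ n - d (r - 1) →
      1 ≤ aIdx t ∧ aIdx t ≤ r ∧ psum d (aIdx t - 1) < t ∧ t ≤ psum d (aIdx t)) :
    (fullWord n r d aIdx).reverse.prod = σ ∧
    (fullWord n r d aIdx).length =
      ∑ t ∈ Finset.Icc 1 (n - d (r - 1)), (n - psum d (aIdx t)) ∧
    (fullWord n r d aIdx).length = ∑ a ∈ Finset.range r, ∑ b ∈ Finset.Ioo a r, d a * d b ∧
    (fullWord n r d aIdx).length = invCount σ := by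
  have hN : psum d (r-1) = n - d (r-1) := by
    have h1 := Stmt8.psum_succ d (r-1)
    rw [show r - 1 + 1 = r by omega, hsum] at h1
    omega
  have e2 : (fullWord n r d aIdx).length =
      ∑ t ∈ Finset.Icc 1 (n - d (r-1)), (n - psum d (aIdx t)) := by
    rw [Stmt8.len1 aIdx, Stmt8.sum_reflect (fun t => n - psum d (aIdx t)) (n - d (r-1))]
  have e5 : ∑ t ∈ Finset.Icc 1 (n - d (r-1)), (n - psum d (aIdx t)) =
      ∑ i ∈ Finset.range n, (n - psum d (Stmt8.blk d r i + 1)) := by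
    rw [Stmt8.len2 hr hsum aIdx haIdx, show n - d (r-1) = psum d (r-1) from hN.symm,
      Stmt8.sum_extend hr hsum]
  have e3 : ∑ t ∈ Finset.Icc 1 (n - d (r-1)), (n - psum d (aIdx t)) =
      ∑ a ∈ Finset.range r, ∑ b ∈ Finset.Ioo a r, d a * d b := by
    rw [e5]
    have hb := Stmt8.sum_blocks hr hsum r le_rfl
    rw [hsum] at hb
    rw [hb]
    apply Finset.sum_congr rfl
    intro a ha
    rw [Stmt8.sum_Ioo hsum (Finset.mem_range.mp ha)]
  have e4 : invCount σ = ∑ i ∈ Finset.range n, (n - psum d (Stmt8.blk d r i + 1)) :=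
    Stmt8.invCount_eq hr hsum hσ
  exact ⟨Stmt8.prod_eq hr hsum σ hσ aIdx haIdx, e2, e2.trans e3,
    by rw [e2, e5, e4]⟩
end

section
/- Fix n ≥ 2 and a permutation σ of {1,…,n}. Let U(ℝ) be the group of upper triangular unipotent real n×n matrices, let U_σ(ℝ) = {x ∈ U(ℝ) : x_{ij} = 0 for all i < j with σ(i) < σ(j)} and Ū_σ(ℝ) = {x ∈ U(ℝ) : x_{ij} = 0 for all i < j with σ(i) > σ(j)}. Then U_σ(ℝ) and Ū_σ(ℝ) are subgroups of U(ℝ), and every u ∈ U(ℝ) can be written uniquely as u = u₁ u₂ with u₁ ∈ U_σ(ℝ) and u₂ ∈ Ū_σ(ℝ), and also uniquely as u = v₂ v₁ with v₂ ∈ Ū_σ(ℝ) and v₁ ∈ U_σ(ℝ). -/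
open Matrix

/-- Membership in `U_σ(ℝ)`: upper triangular unipotent with `x_{ij} = 0` for all `i < j`
with `σ(i) < σ(j)`. -/
def MemU {n : ℕ} (σ : Equiv.Perm (Fin n)) (x : Matrix (Fin n) (Fin n) ℝ) : Prop :=
  IsUnipUpper x ∧ ∀ i j : Fin n, i < j → σ i < σ j → x i j = 0

/-- Membership in `Ū_σ(ℝ)`: upper triangular unipotent with `x_{ij} = 0` for all `i < j`
with `σ(i) > σ(j)`. -/
def MemUbar {n : ℕ} (σ : Equiv.Perm (Fin n)) (x : Matrix (Fin n) (Fin n) ℝ) : Prop :=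
  IsUnipUpper x ∧ ∀ i j : Fin n, i < j → σ j < σ i → x i j = 0

namespace Stmt15Aux

open scoped Classical

variable {n : ℕ}

/-- Generic membership: unipotent upper triangular with zeros at the `P`-positions. -/
def Mem (P : Fin n → Fin n → Prop) (x : Matrix (Fin n) (Fin n) ℝ) : Prop :=
  IsUnipUpper x ∧ ∀ i j : Fin n, i < j → P i j → x i j = 0

/-- The splitting (co-transitivity) property of the zero-pattern. -/
def Split (P : Fin n → Fin n → Prop) : Prop :=
  ∀ i k j : Fin n, i < k → k < j → P i j → P i k ∨ P k j

lemma sum_eq_Icc {a b : Fin n → ℝ} {i j : Fin n} (ha : ∀ k, k < i → a k = 0)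
    (hb : ∀ k, j < k → b k = 0) :
    ∑ k, a k * b k = ∑ k ∈ Finset.Icc i j, a k * b k := by
  refine (Finset.sum_subset (Finset.subset_univ _) ?_).symm
  intro k _ hk
  simp only [Finset.mem_Icc, not_and_or, not_le] at hk
  rcases hk with h | h
  · rw [ha k h, zero_mul]
  · rw [hb k h, mul_zero]

lemma sum_Icc_split {f : Fin n → ℝ} {i j : Fin n} (h : i < j) :
    ∑ k ∈ Finset.Icc i j, f k = f i + ((∑ k ∈ Finset.Ioo i j, f k) + f j) := by
  rw [← Finset.Ioc_insert_left h.le, Finset.sum_insert (by simp),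
    ← Finset.Ioo_insert_right h, Finset.sum_insert (by simp)]
  ring

lemma mul_apply_unip {x y : Matrix (Fin n) (Fin n) ℝ} (hx : IsUnipUpper x)
    (hy : IsUnipUpper y) {i j : Fin n} (h : i < j) :
    (x * y) i j = y i j + ((∑ k ∈ Finset.Ioo i j, x i k * y k j) + x i j) := by
  rw [Matrix.mul_apply, sum_eq_Icc (fun k hk => hx.2 i k hk) (fun k hk => hy.2 k j hk),
    sum_Icc_split h, hx.1, hy.1, one_mul, mul_one]

lemma mul_unip {x y : Matrix (Fin n) (Fin n) ℝ} (hx : IsUnipUpper x)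
    (hy : IsUnipUpper y) : IsUnipUpper (x * y) := by
  constructor
  · intro i
    rw [Matrix.mul_apply, sum_eq_Icc (fun k hk => hx.2 i k hk) (fun k hk => hy.2 k i hk),
      Finset.Icc_self, Finset.sum_singleton, hx.1, hy.1, one_mul]
  · intro i j h
    rw [Matrix.mul_apply, sum_eq_Icc (fun k hk => hx.2 i k hk) (fun k hk => hy.2 k j hk),
      Finset.Icc_eq_empty (not_le.mpr h), Finset.sum_empty]

lemma mem_one (P : Fin n → Fin n → Prop) : Mem P 1 :=
  ⟨⟨fun i => Matrix.one_apply_eq i, fun i j h => Matrix.one_apply_ne h.ne'⟩,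
   fun i j h _ => Matrix.one_apply_ne h.ne⟩

lemma mem_mul {P : Fin n → Fin n → Prop} (hP : Split P) {x y : Matrix (Fin n) (Fin n) ℝ}
    (hx : Mem P x) (hy : Mem P y) : Mem P (x * y) := by
  refine ⟨mul_unip hx.1 hy.1, ?_⟩
  intro i j hij hp
  rw [mul_apply_unip hx.1 hy.1 hij, hx.2 i j hij hp, hy.2 i j hij hp]
  have hz : ∑ k ∈ Finset.Ioo i j, x i k * y k j = 0 := by
    refine Finset.sum_eq_zero fun k hk => ?_
    rw [Finset.mem_Ioo] at hk
    rcases hP i k j hk.1 hk.2 hp with h | h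
    · rw [hx.2 i k hk.1 h, zero_mul]
    · rw [hy.2 k j hk.2 h, mul_zero]
  rw [hz]; ring

/-- Explicit inverse of a unipotent upper triangular matrix, by recursion on `j - i`. -/
noncomputable def invm (x : Matrix (Fin n) (Fin n) ℝ) : Fin n → Fin n → ℝ
  | i, j =>
    if hij : i < j then
      - x i j - ∑ k ∈ (Finset.Ioo i j).attach, x i k.1 * invm x k.1 j
    else if i = j then 1 else 0
termination_by i j => (j : ℕ) - (i : ℕ)
decreasing_by
  have hk := k.2
  rw [Finset.mem_Ioo] at hk
  obtain ⟨h1, h2⟩ := hk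
  simp only [Fin.lt_def] at h1 h2
  omega

lemma invm_lt {x : Matrix (Fin n) (Fin n) ℝ} {i j : Fin n} (h : i < j) :
    invm x i j = - x i j - ∑ k ∈ Finset.Ioo i j, x i k * invm x k j := by
  rw [invm, dif_pos h]
  congr 1
  exact Finset.sum_attach (Finset.Ioo i j) (fun k => x i k * invm x k j)

lemma invm_diag (x : Matrix (Fin n) (Fin n) ℝ) (i : Fin n) : invm x i i = 1 := by
  rw [invm, dif_neg (lt_irrefl i), if_pos rfl]

lemma invm_lower {x : Matrix (Fin n) (Fin n) ℝ} {i j : Fin n} (h : j < i) :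
    invm x i j = 0 := by
  rw [invm, dif_neg (asymm h), if_neg h.ne']

/-- The explicit inverse as a matrix. -/
noncomputable def zMat (x : Matrix (Fin n) (Fin n) ℝ) : Matrix (Fin n) (Fin n) ℝ :=
  Matrix.of (invm x)

lemma zMat_unip (x : Matrix (Fin n) (Fin n) ℝ) : IsUnipUpper (zMat x) :=
  ⟨fun i => invm_diag x i, fun _ _ h => invm_lower h⟩

lemma mul_zMat {x : Matrix (Fin n) (Fin n) ℝ} (hx : IsUnipUpper x) : x * zMat x = 1 := by
  ext i j
  rcases lt_trichotomy i j with h | h | h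
  · rw [mul_apply_unip hx (zMat_unip x) h, Matrix.one_apply_ne h.ne]
    show invm x i j + ((∑ k ∈ Finset.Ioo i j, x i k * invm x k j) + x i j) = 0
    rw [invm_lt h]; ring
  · subst h
    rw [(mul_unip hx (zMat_unip x)).1 i, Matrix.one_apply_eq]
  · rw [(mul_unip hx (zMat_unip x)).2 i j h, Matrix.one_apply_ne (fun e => h.ne e.symm)]

lemma zMat_mul {x : Matrix (Fin n) (Fin n) ℝ} (hx : IsUnipUpper x) : zMat x * x = 1 :=
  mul_eq_one_comm.mp (mul_zMat hx)

lemma mem_zMat {P : Fin n → Fin n → Prop} (hP : Split P) {x : Matrix (Fin n) (Fin n) ℝ}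
    (hx : Mem P x) : Mem P (zMat x) := by
  refine ⟨zMat_unip x, ?_⟩
  suffices H : ∀ d : ℕ, ∀ i j : Fin n, (j : ℕ) - (i : ℕ) = d → i < j → P i j →
      invm x i j = 0 from fun i j h hp => H _ i j rfl h hp
  intro d
  induction d using Nat.strong_induction_on with
  | _ d ih =>
    intro i j hd hij hp
    rw [invm_lt hij, hx.2 i j hij hp]
    have hz : ∑ k ∈ Finset.Ioo i j, x i k * invm x k j = 0 := by
      refine Finset.sum_eq_zero fun k hk => ?_
      rw [Finset.mem_Ioo] at hk
      rcases hP i k j hk.1 hk.2 hp with h | h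
      · rw [hx.2 i k hk.1 h, zero_mul]
      · have hik : (i : ℕ) < (k : ℕ) := hk.1
        have hkj : (k : ℕ) < (j : ℕ) := hk.2
        rw [ih ((j : ℕ) - (k : ℕ)) (by omega) k j rfl hk.2 h, mul_zero]
    rw [hz]; ring

lemma mem_inv {P : Fin n → Fin n → Prop} (hP : Split P) {x : Matrix (Fin n) (Fin n) ℝ}
    (hx : Mem P x) : Mem P x⁻¹ := by
  rw [Matrix.inv_eq_right_inv (mul_zMat hx.1)]
  exact mem_zMat hP hx

/-- The decomposition: recursively defined pair of entries of the two factors. -/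
noncomputable def dec (P : Fin n → Fin n → Prop) (u : Matrix (Fin n) (Fin n) ℝ) :
    Fin n → Fin n → ℝ × ℝ
  | i, j =>
    if hij : i < j then
      if P i j then
        (0, u i j - ∑ k ∈ (Finset.Ioo i j).attach, (dec P u i k.1).1 * (dec P u k.1 j).2)
      else
        (u i j - ∑ k ∈ (Finset.Ioo i j).attach, (dec P u i k.1).1 * (dec P u k.1 j).2, 0)
    else (0, 0)
termination_by i j => (j : ℕ) - (i : ℕ)
decreasing_by
  all_goals
    have hk := k.2
    rw [Finset.mem_Ioo] at hk
    obtain ⟨h1, h2⟩ := hk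
    simp only [Fin.lt_def] at h1 h2
    omega

lemma dec_fst {P : Fin n → Fin n → Prop} {u : Matrix (Fin n) (Fin n) ℝ} {i j : Fin n}
    (hij : i < j) (hp : P i j) : (dec P u i j).1 = 0 := by
  rw [dec, dif_pos hij, if_pos hp]

lemma dec_snd {P : Fin n → Fin n → Prop} {u : Matrix (Fin n) (Fin n) ℝ} {i j : Fin n}
    (hij : i < j) (hp : ¬ P i j) : (dec P u i j).2 = 0 := by
  rw [dec, dif_pos hij, if_neg hp]

lemma dec_add {P : Fin n → Fin n → Prop} {u : Matrix (Fin n) (Fin n) ℝ} {i j : Fin n}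
    (hij : i < j) :
    (dec P u i j).1 + (dec P u i j).2 =
      u i j - ∑ k ∈ Finset.Ioo i j, (dec P u i k).1 * (dec P u k j).2 := by
  rw [dec, dif_pos hij]
  split
  · simp only [zero_add, add_zero]
    congr 1
    exact Finset.sum_attach (Finset.Ioo i j) (fun k => (dec P u i k).1 * (dec P u k j).2)
  · simp only [zero_add, add_zero]
    congr 1
    exact Finset.sum_attach (Finset.Ioo i j) (fun k => (dec P u i k).1 * (dec P u k j).2)

/-- The left factor. -/
noncomputable def facL (P : Fin n → Fin n → Prop) (u : Matrix (Fin n) (Fin n) ℝ) :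
    Matrix (Fin n) (Fin n) ℝ :=
  Matrix.of fun i j => if i = j then 1 else if i < j then (dec P u i j).1 else 0

/-- The right factor. -/
noncomputable def facR (P : Fin n → Fin n → Prop) (u : Matrix (Fin n) (Fin n) ℝ) :
    Matrix (Fin n) (Fin n) ℝ :=
  Matrix.of fun i j => if i = j then 1 else if i < j then (dec P u i j).2 else 0

lemma facL_unip (P : Fin n → Fin n → Prop) (u : Matrix (Fin n) (Fin n) ℝ) :
    IsUnipUpper (facL P u) :=
  ⟨fun i => if_pos rfl, fun i j h => by
    show (if i = j then (1:ℝ) else if i < j then _ else 0) = 0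
    rw [if_neg h.ne', if_neg (asymm h)]⟩

lemma facR_unip (P : Fin n → Fin n → Prop) (u : Matrix (Fin n) (Fin n) ℝ) :
    IsUnipUpper (facR P u) :=
  ⟨fun i => if_pos rfl, fun i j h => by
    show (if i = j then (1:ℝ) else if i < j then _ else 0) = 0
    rw [if_neg h.ne', if_neg (asymm h)]⟩

lemma facL_apply {P : Fin n → Fin n → Prop} {u : Matrix (Fin n) (Fin n) ℝ} {i j : Fin n}
    (h : i < j) : facL P u i j = (dec P u i j).1 := by
  show (if i = j then (1:ℝ) else if i < j then _ else 0) = _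
  rw [if_neg h.ne, if_pos h]

lemma facR_apply {P : Fin n → Fin n → Prop} {u : Matrix (Fin n) (Fin n) ℝ} {i j : Fin n}
    (h : i < j) : facR P u i j = (dec P u i j).2 := by
  show (if i = j then (1:ℝ) else if i < j then _ else 0) = _
  rw [if_neg h.ne, if_pos h]

lemma facL_mem {P : Fin n → Fin n → Prop} {u : Matrix (Fin n) (Fin n) ℝ} : Mem P (facL P u) := by
  refine ⟨facL_unip P u, fun i j hij hp => ?_⟩
  rw [facL_apply hij, dec_fst hij hp]

lemma facR_mem {P Q : Fin n → Fin n → Prop} {u : Matrix (Fin n) (Fin n) ℝ}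
    (hPQ : ∀ i j : Fin n, Q i j → ¬ P i j) : Mem Q (facR P u) := by
  refine ⟨facR_unip P u, fun i j hij hq => ?_⟩
  rw [facR_apply hij, dec_snd hij (hPQ i j hq)]

lemma fac_mul {P : Fin n → Fin n → Prop} {u : Matrix (Fin n) (Fin n) ℝ}
    (hu : IsUnipUpper u) : u = facL P u * facR P u := by
  ext i j
  rcases lt_trichotomy i j with h | h | h
  · rw [mul_apply_unip (facL_unip P u) (facR_unip P u) h, facL_apply h, facR_apply h]
    have hs : ∑ k ∈ Finset.Ioo i j, facL P u i k * facR P u k j =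
        ∑ k ∈ Finset.Ioo i j, (dec P u i k).1 * (dec P u k j).2 := by
      refine Finset.sum_congr rfl fun k hk => ?_
      rw [Finset.mem_Ioo] at hk
      rw [facL_apply hk.1, facR_apply hk.2]
    rw [hs]
    have h2 := dec_add (P := P) (u := u) h
    linarith
  · subst h
    rw [hu.1 i, (mul_unip (facL_unip P u) (facR_unip P u)).1 i]
  · rw [hu.2 i j h, (mul_unip (facL_unip P u) (facR_unip P u)).2 i j h]

/-- Trivial intersection: if `x` lies in both pattern groups covering all upper positions. -/
lemma inter_triv {P Q : Fin n → Fin n → Prop} (hcov : ∀ i j : Fin n, i < j → P i j ∨ Q i j)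
    {x : Matrix (Fin n) (Fin n) ℝ} (hx : Mem P x) (hy : Mem Q x) : x = 1 := by
  ext i j
  rcases lt_trichotomy i j with h | h | h
  · rw [Matrix.one_apply_ne h.ne]
    rcases hcov i j h with hp | hq
    · exact hx.2 i j h hp
    · exact hy.2 i j h hq
  · subst h; rw [hx.1.1 i, Matrix.one_apply_eq]
  · rw [hx.1.2 i j h, Matrix.one_apply_ne h.ne']

/-- Generic uniqueness of the factorization. -/
lemma fact_uniq {P Q : Fin n → Fin n → Prop} (hP : Split P) (hQ : Split Q)
    (hcov : ∀ i j : Fin n, i < j → P i j ∨ Q i j)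
    {p q : Matrix (Fin n) (Fin n) ℝ × Matrix (Fin n) (Fin n) ℝ}
    (hp1 : Mem P p.1) (hp2 : Mem Q p.2) (hq1 : Mem P q.1) (hq2 : Mem Q q.2)
    (h : p.1 * p.2 = q.1 * q.2) : p = q := by
  have hw : zMat q.1 * q.1 = 1 := zMat_mul hq1.1
  have hz : p.2 * zMat p.2 = 1 := mul_zMat hp2.1
  have key : zMat q.1 * p.1 = q.2 * zMat p.2 := by
    have : p.1 = q.1 * q.2 * zMat p.2 := by
      calc p.1 = p.1 * (p.2 * zMat p.2) := by rw [hz, mul_one]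
        _ = p.1 * p.2 * zMat p.2 := by rw [mul_assoc]
        _ = q.1 * q.2 * zMat p.2 := by rw [h]
    rw [this]
    calc zMat q.1 * (q.1 * q.2 * zMat p.2) = zMat q.1 * q.1 * q.2 * zMat p.2 := by
          rw [mul_assoc, mul_assoc, mul_assoc]
      _ = q.2 * zMat p.2 := by rw [hw, one_mul]
  have hmemP : Mem P (zMat q.1 * p.1) := mem_mul hP (mem_zMat hP hq1) hp1
  have hmemQ : Mem Q (zMat q.1 * p.1) := by
    rw [key]; exact mem_mul hQ hq2 (mem_zMat hQ hp2)
  have hone : zMat q.1 * p.1 = 1 := inter_triv hcov hmemP hmemQ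
  have h1 : p.1 = q.1 := by
    have hqw : q.1 * zMat q.1 = 1 := mul_zMat hq1.1
    calc p.1 = 1 * p.1 := (one_mul _).symm
      _ = q.1 * zMat q.1 * p.1 := by rw [hqw]
      _ = q.1 * (zMat q.1 * p.1) := by rw [mul_assoc]
      _ = q.1 := by rw [hone, mul_one]
  have h2 : p.2 = q.2 := by
    have hz1 : zMat p.1 * p.1 = 1 := zMat_mul hp1.1
    calc p.2 = 1 * p.2 := (one_mul _).symm
      _ = zMat p.1 * p.1 * p.2 := by rw [hz1]
      _ = zMat p.1 * (p.1 * p.2) := by rw [mul_assoc]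
      _ = zMat p.1 * (p.1 * q.2) := by rw [h, h1]
      _ = zMat p.1 * p.1 * q.2 := by rw [mul_assoc]
      _ = q.2 := by rw [hz1, one_mul]
  exact Prod.ext h1 h2

end Stmt15Aux

open Stmt15Aux in
/-- `U_σ(ℝ)` and `Ū_σ(ℝ)` are subgroups of the group of upper triangular
unipotent matrices, and every upper triangular unipotent `u` factors uniquely as `u = u₁u₂`
with `u₁ ∈ U_σ(ℝ)`, `u₂ ∈ Ū_σ(ℝ)`, and also uniquely as `u = v₂v₁` with `v₂ ∈ Ū_σ(ℝ)`,
`v₁ ∈ U_σ(ℝ)`. -/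
theorem stmt15 (n : ℕ) (hn : 2 ≤ n) (σ : Equiv.Perm (Fin n)) :
    MemU σ (1 : Matrix (Fin n) (Fin n) ℝ) ∧
    (∀ x y, MemU σ x → MemU σ y → MemU σ (x * y)) ∧
    (∀ x, MemU σ x → MemU σ x⁻¹) ∧
    MemUbar σ (1 : Matrix (Fin n) (Fin n) ℝ) ∧
    (∀ x y, MemUbar σ x → MemUbar σ y → MemUbar σ (x * y)) ∧
    (∀ x, MemUbar σ x → MemUbar σ x⁻¹) ∧
    (∀ u : Matrix (Fin n) (Fin n) ℝ, IsUnipUpper u →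
      (∃! p : Matrix (Fin n) (Fin n) ℝ × Matrix (Fin n) (Fin n) ℝ,
        MemU σ p.1 ∧ MemUbar σ p.2 ∧ u = p.1 * p.2) ∧
      (∃! p : Matrix (Fin n) (Fin n) ℝ × Matrix (Fin n) (Fin n) ℝ,
        MemUbar σ p.1 ∧ MemU σ p.2 ∧ u = p.1 * p.2)) := by
  set P1 : Fin n → Fin n → Prop := fun i j => σ i < σ j with hP1
  set P2 : Fin n → Fin n → Prop := fun i j => σ j < σ i with hP2
  have memU_eq : ∀ x, MemU σ x ↔ Mem P1 x := fun x => Iff.rfl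
  have memUbar_eq : ∀ x, MemUbar σ x ↔ Mem P2 x := fun x => Iff.rfl
  have hs1 : Split P1 := by
    intro i k j _ _ h
    rcases lt_or_ge (σ i) (σ k) with h' | h'
    · exact Or.inl h'
    · exact Or.inr (lt_of_le_of_lt h' h)
  have hs2 : Split P2 := by
    intro i k j _ _ h
    rcases lt_or_ge (σ k) (σ i) with h' | h'
    · exact Or.inl h'
    · exact Or.inr (lt_of_lt_of_le h h')
  have hcov12 : ∀ i j : Fin n, i < j → P1 i j ∨ P2 i j := by
    intro i j hij
    have hne : σ i ≠ σ j := fun e => hij.ne (σ.injective e)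
    exact hne.lt_or_gt
  have hcov21 : ∀ i j : Fin n, i < j → P2 i j ∨ P1 i j := fun i j hij => (hcov12 i j hij).symm
  have h12 : ∀ i j : Fin n, P2 i j → ¬ P1 i j := fun _ _ h => lt_asymm h
  have h21 : ∀ i j : Fin n, P1 i j → ¬ P2 i j := fun _ _ h => lt_asymm h
  refine ⟨mem_one P1, fun x y hx hy => mem_mul hs1 hx hy, fun x hx => mem_inv hs1 hx,
    mem_one P2, fun x y hx hy => mem_mul hs2 hx hy, fun x hx => mem_inv hs2 hx, ?_⟩
  intro u hu
  constructor
  · refine ⟨(facL P1 u, facR P1 u), ⟨facL_mem, facR_mem h12, fac_mul hu⟩, ?_⟩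
    rintro q ⟨hq1, hq2, hq⟩
    exact fact_uniq hs1 hs2 hcov12 hq1 hq2 facL_mem (facR_mem h12) (hq.symm.trans (fac_mul hu))
  · refine ⟨(facL P2 u, facR P2 u), ⟨facL_mem, facR_mem h21, fac_mul hu⟩, ?_⟩
    rintro q ⟨hq1, hq2, hq⟩
    exact fact_uniq hs2 hs1 hcov21 hq1 hq2 facL_mem (facR_mem h21) (hq.symm.trans (fac_mul hu))
end
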